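/- arXiv:2305.11025 — 3 statements merged into one kernel-verified Lean document; each statement's English description precedes it below -/
import Mathlib

section
/- Let I : 𝔻 → 𝔻 be an inner function, α ∈ 𝕋, and σ_α its Clark measure. Then the radial boundary value I(ζ) exists and equals α for σ_α-almost every ζ ∈ 𝕋. -/
open MeasureTheory Complex Filter Real Set

noncomputable section

def unitDisk : Set ℂ := {z : ℂ | ‖z‖ < 1}

def unitCircle : Set ℂ := {z : ℂ | ‖z‖ = 1}

/-- Normalized Lebesgue (arclength) measure on the unit circle, realized as a measure on `ℂ`. -/
def mCircle : Measure ℂ :=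
  (ENNReal.ofReal (2 * π))⁻¹ •
    Measure.map (fun θ : ℝ => Complex.exp (θ * Complex.I))
      (volume.restrict (Set.Ioc 0 (2 * π)))

/-- `f` has radial limit `L` at the boundary point `ζ`. -/
def HasRadialLimit (f : ℂ → ℂ) (ζ L : ℂ) : Prop :=
  Filter.Tendsto (fun r : ℝ => f ((r : ℂ) * ζ)) (nhdsWithin 1 (Set.Iio 1)) (nhds L)

/-- `I` is an inner function on the unit disk with boundary-value function `Ib`. -/
def IsInner (I Ib : ℂ → ℂ) : Prop :=
  DifferentiableOn ℂ I unitDisk ∧ Set.MapsTo I unitDisk unitDisk ∧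
    ∀ᵐ ζ ∂mCircle, HasRadialLimit I ζ (Ib ζ) ∧ ‖Ib ζ‖ = 1

/-- Poisson integral of a (positive finite) measure on the circle. -/
def poissonIntegral (μ : Measure ℂ) (z : ℂ) : ℝ :=
  ∫ ζ, (1 - ‖z‖ ^ 2) / ‖ζ - z‖ ^ 2 ∂μ

/-- `σ` is the Clark measure of the inner function `I` at `α ∈ 𝕋`. -/
def IsClarkMeasure (I : ℂ → ℂ) (α : ℂ) (σ : Measure ℂ) : Prop :=
  IsFiniteMeasure σ ∧ σ unitCircleᶜ = 0 ∧
    ∀ z ∈ unitDisk, poissonIntegral σ z =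
      (1 - ‖I z‖ ^ 2) / ‖α - I z‖ ^ 2



lemma measurable_expI : Measurable (fun θ : ℝ => Complex.exp (θ * Complex.I)) :=
  (Complex.continuous_exp.comp ((Complex.continuous_ofReal).mul continuous_const)).measurable

instance : IsFiniteMeasure mCircle := by
  constructor
  rw [mCircle, Measure.smul_apply, Measure.map_apply measurable_expI MeasurableSet.univ]
  simp only [Set.preimage_univ, Measure.restrict_apply MeasurableSet.univ, Set.univ_inter,
    Real.volume_Ioc, smul_eq_mul]
  exact ENNReal.mul_lt_top (ENNReal.inv_lt_top.2 (by positivity)) ENNReal.ofReal_lt_top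

lemma dist_expI (θ θ' : ℝ) :
    dist (Complex.exp (θ * Complex.I)) (Complex.exp (θ' * Complex.I)) ≤ dist θ θ' := by
  have := (lipschitzWith_circleMap 0 1).dist_le_mul θ θ'
  simpa [circleMap] using this

lemma exists_theta {ζ : ℂ} (hζ : ζ ∈ unitCircle) :
    ∃ θ₀ ∈ Set.Ioc (0:ℝ) (2*π), Complex.exp (θ₀ * Complex.I) = ζ := by
  have hbase : Complex.exp ((Complex.arg ζ) * Complex.I) = ζ := by
    have := Complex.norm_mul_exp_arg_mul_I ζ
    rwa [hζ, Complex.ofReal_one, one_mul] at this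
  rcases le_or_gt (Complex.arg ζ) 0 with h | h
  · refine ⟨Complex.arg ζ + 2*π, ⟨?_, ?_⟩, ?_⟩
    · linarith [Complex.neg_pi_lt_arg ζ, Real.pi_pos]
    · linarith [Complex.arg_le_pi ζ, Real.pi_pos]
    · push_cast
      rw [add_mul, Complex.exp_add, hbase]
      have : Complex.exp ((2*π : ℝ) * Complex.I) = 1 := by
        push_cast; exact Complex.exp_two_pi_mul_I
      push_cast at this
      rw [this, mul_one]
  · exact ⟨Complex.arg ζ, ⟨h, by linarith [Complex.arg_le_pi ζ, Real.pi_pos]⟩, hbase⟩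

lemma mCircle_closedBall_ge {ζ : ℂ} (hζ : ζ ∈ unitCircle) {δ : ℝ} (h0 : 0 < δ) (hπ : δ ≤ π) :
    ENNReal.ofReal (δ / (2*π)) ≤ mCircle (Metric.closedBall ζ δ) := by
  obtain ⟨θ₀, ⟨hθ₀0, hθ₀2π⟩, hexp⟩ := exists_theta hζ
  -- choose an interval J of length δ inside (0, 2π] around θ₀
  obtain ⟨a, ha⟩ : ∃ a : ℝ, Set.Ioc a (a+δ) ⊆ Set.Ioc 0 (2*π) ∧
      ∀ θ ∈ Set.Ioc a (a+δ), |θ - θ₀| ≤ δ := by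
    rcases le_or_gt θ₀ π with hle | hgt
    · refine ⟨θ₀, fun θ hθ => ⟨lt_trans hθ₀0 hθ.1, by linarith [hθ.2]⟩, fun θ hθ => ?_⟩
      rw [abs_le]; constructor <;> [linarith [hθ.1.le]; linarith [hθ.2]]
    · refine ⟨θ₀ - δ, fun θ hθ => ⟨by linarith [hθ.1, Real.pi_pos], by linarith [hθ.2]⟩,
        fun θ hθ => ?_⟩
      rw [abs_le]; constructor <;> [linarith [hθ.1.le]; linarith [hθ.2]]
  have hsub : Set.Ioc a (a+δ) ⊆
      (fun θ : ℝ => Complex.exp (θ * Complex.I)) ⁻¹' Metric.closedBall ζ δ ∩ Set.Ioc 0 (2*π) := by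
    intro θ hθ
    refine ⟨?_, ha.1 hθ⟩
    simp only [Set.mem_preimage, Metric.mem_closedBall]
    calc dist (Complex.exp (θ * Complex.I)) ζ = dist (Complex.exp (θ * Complex.I))
          (Complex.exp (θ₀ * Complex.I)) := by rw [hexp]
      _ ≤ dist θ θ₀ := dist_expI θ θ₀
      _ ≤ δ := by rw [Real.dist_eq]; exact ha.2 θ hθ
  rw [mCircle, Measure.smul_apply, Measure.map_apply measurable_expI measurableSet_closedBall,
    Measure.restrict_apply (measurable_expI measurableSet_closedBall), smul_eq_mul]
  calc ENNReal.ofReal (δ / (2*π)) = (ENNReal.ofReal (2*π))⁻¹ * ENNReal.ofReal δ := by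
        rw [ENNReal.ofReal_div_of_pos (by positivity), ENNReal.div_eq_inv_mul]
    _ ≤ _ := by
        refine mul_le_mul_right ?_ _
        calc ENNReal.ofReal δ = volume (Set.Ioc a (a+δ)) := by
              rw [Real.volume_Ioc]; ring_nf
          _ ≤ _ := measure_mono hsub



lemma poisson_kernel_integrable (σ : Measure ℂ) [IsFiniteMeasure σ] (hnull : σ unitCircleᶜ = 0)
    {z : ℂ} (hz : z ∈ unitDisk) :
    Integrable (fun w => (1 - ‖z‖ ^ 2) / ‖w - z‖ ^ 2) σ := by
  have hmeas : Measurable (fun w : ℂ => (1 - ‖z‖ ^ 2) / ‖w - z‖ ^ 2) :=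
    ((continuous_norm.comp (continuous_id.sub continuous_const)).measurable.pow_const 2).const_div _
  have hz1 : ‖z‖ < 1 := hz
  have haecirc : ∀ᵐ w ∂σ, w ∈ unitCircle := by
    exact ae_iff.2 hnull
  refine Integrable.mono' (integrable_const ((1 - ‖z‖ ^ 2) / (1 - ‖z‖) ^ 2))
    hmeas.aestronglyMeasurable ?_
  filter_upwards [haecirc] with w hw
  have hd : 1 - ‖z‖ ≤ ‖w - z‖ := by
    have h2 := norm_sub_norm_le w z
    rw [hw] at h2; linarith
  have hd0 : (0:ℝ) < 1 - ‖z‖ := by linarith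
  have hnum : (0:ℝ) ≤ 1 - ‖z‖ ^ 2 := by nlinarith [norm_nonneg z]
  rw [Real.norm_eq_abs, _root_.abs_of_nonneg (by positivity)]
  exact div_le_div_of_nonneg_left hnum (by positivity) (pow_le_pow_left₀ hd0.le hd 2)

lemma poisson_lb (σ : Measure ℂ) [IsFiniteMeasure σ] (hnull : σ unitCircleᶜ = 0)
    {ζ : ℂ} (hζ : ζ ∈ unitCircle) {r : ℝ} (h0 : 0 < r) (h1 : r < 1) :
    (σ (Metric.closedBall ζ ((1-r)/2))).toReal * ((4/9) * (1-r)⁻¹) ≤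
      poissonIntegral σ ((r:ℂ)*ζ) := by
  have hζ' : ‖ζ‖ = 1 := hζ
  set z := (r:ℂ)*ζ with hzdef
  have haz : ‖z‖ = r := by
    rw [hzdef, norm_mul, Complex.norm_real, Real.norm_eq_abs, hζ', mul_one, abs_of_pos h0]
  have hzD : z ∈ unitDisk := by rw [unitDisk, Set.mem_setOf_eq, haz]; exact h1
  have hint := poisson_kernel_integrable σ hnull hzD
  have hnonneg : 0 ≤ᵐ[σ] fun w => (1 - ‖z‖ ^ 2) / ‖w - z‖ ^ 2 := by
    refine Eventually.of_forall fun w => div_nonneg ?_ (by positivity)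
    rw [haz]; nlinarith
  have hdistζz : dist ζ z = 1 - r := by
    rw [dist_eq_norm]
    have : ζ - z = (1 - (r:ℂ)) * ζ := by rw [hzdef]; ring
    rw [this, norm_mul, hζ', mul_one]
    rw [show (1:ℂ) - (r:ℂ) = ((1 - r : ℝ) : ℂ) by push_cast; ring, Complex.norm_real, Real.norm_eq_abs,
      abs_of_pos (by linarith)]
  have hbound : ∀ w ∈ Metric.closedBall ζ ((1-r)/2),
      (4/9) * (1-r)⁻¹ ≤ (1 - ‖z‖ ^ 2) / ‖w - z‖ ^ 2 := by
    intro w hw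
    rw [Metric.mem_closedBall] at hw
    have hdu : ‖w - z‖ ≤ (3/2) * (1 - r) := by
      rw [← dist_eq_norm]
      calc dist w z ≤ dist w ζ + dist ζ z := dist_triangle w ζ z
        _ ≤ (1-r)/2 + (1-r) := by rw [hdistζz]; linarith
        _ = (3/2) * (1-r) := by ring
    have hdl : (1 - r)/2 ≤ ‖w - z‖ := by
      rw [← dist_eq_norm]
      have := dist_triangle ζ w z
      rw [dist_comm ζ w] at this
      linarith [hdistζz ▸ this]
    have h1r : (0:ℝ) < 1 - r := by linarith
    have key : (4/9) * (1-r)⁻¹ = (1 - r) / ((3/2) * (1-r))^2 := by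
      field_simp; ring
    rw [key, haz]
    exact div_le_div₀ (by nlinarith) (by nlinarith) (by nlinarith)
      (pow_le_pow_left₀ (by positivity) hdu 2)
  calc (σ (Metric.closedBall ζ ((1-r)/2))).toReal * ((4/9) * (1-r)⁻¹)
      = ((4/9) * (1-r)⁻¹) * (σ (Metric.closedBall ζ ((1-r)/2))).toReal := by ring
    _ ≤ ∫ w in Metric.closedBall ζ ((1-r)/2), (1 - ‖z‖ ^ 2) / ‖w - z‖ ^ 2 ∂σ :=
        by have := setIntegral_ge_of_const_le measurableSet_closedBall (measure_ne_top σ _) hbound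
             hint.integrableOn
           simp only [smul_eq_mul, measureReal_def] at this
           linarith
    _ ≤ poissonIntegral σ z := setIntegral_le_integral hint hnonneg

open Topology

lemma ae_mem_circle (τ : Measure ℂ) (hnull : τ unitCircleᶜ = 0) : ∀ᵐ ζ ∂τ, ζ ∈ unitCircle :=
  ae_iff.2 hnull

lemma density_helper (τ : Measure ℂ) [IsFiniteMeasure τ] {ζ : ℂ} (hζ : ζ ∈ unitCircle)
    {K : ℝ} (hK : 0 < K)
    (h : ∀ᶠ δ in 𝓝[>] (0:ℝ),
      mCircle (Metric.closedBall ζ δ) / τ (Metric.closedBall ζ δ) < ENNReal.ofReal K) :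
    ∀ᶠ δ in 𝓝[>] (0:ℝ),
      ENNReal.ofReal ((2*π*K)⁻¹ * δ) ≤ τ (Metric.closedBall ζ δ) := by
  filter_upwards [h, Ioc_mem_nhdsGT_of_mem ⟨le_rfl, Real.pi_pos⟩] with δ hratio hδ
  have hm := mCircle_closedBall_ge hζ hδ.1 hδ.2
  have hm0 : (0:ENNReal) < mCircle (Metric.closedBall ζ δ) :=
    lt_of_lt_of_le (ENNReal.ofReal_pos.2 (div_pos hδ.1 (by positivity))) hm
  have hτ0 : τ (Metric.closedBall ζ δ) ≠ 0 := by
    intro h0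
    rw [h0, ENNReal.div_zero hm0.ne'] at hratio
    exact (hratio.trans_le le_top).false
  have hlt : mCircle (Metric.closedBall ζ δ) < ENNReal.ofReal K * τ (Metric.closedBall ζ δ) :=
    (ENNReal.div_lt_iff (Or.inl hτ0) (Or.inl (measure_ne_top τ _))).1 hratio
  have hdiv : ENNReal.ofReal (δ/(2*π)) / ENNReal.ofReal K ≤ τ (Metric.closedBall ζ δ) := by
    rw [ENNReal.div_le_iff (ENNReal.ofReal_pos.2 hK).ne' ENNReal.ofReal_ne_top]
    exact hm.trans (hlt.le.trans (le_of_eq (mul_comm _ _)))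
  rw [← ENNReal.ofReal_div_of_pos hK] at hdiv
  have : (2*π*K)⁻¹ * δ = δ/(2*π)/K := by field_simp
  rwa [this]

lemma density_lb (σ : Measure ℂ) [IsFiniteMeasure σ] (hnull : σ unitCircleᶜ = 0) :
    ∀ᵐ ζ ∂σ, ∃ c : ℝ, 0 < c ∧ ∀ᶠ δ in 𝓝[>] (0:ℝ),
      ENNReal.ofReal (c * δ) ≤ σ (Metric.closedBall ζ δ) := by
  filter_upwards [Besicovitch.ae_tendsto_rnDeriv mCircle σ, Measure.rnDeriv_lt_top mCircle σ,
    ae_mem_circle σ hnull] with ζ htend hfin hζ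
  set g := mCircle.rnDeriv σ ζ with hg
  set K := (g + 1).toReal with hKdef
  have hg1 : g + 1 ≠ ⊤ := by simp [ENNReal.add_ne_top, hfin.ne]
  have hK : 0 < K := ENNReal.toReal_pos (by simp) hg1
  have hlt : g < ENNReal.ofReal K := by
    rw [hKdef, ENNReal.ofReal_toReal hg1]
    exact ENNReal.lt_add_right hfin.ne one_ne_zero
  refine ⟨(2*π*K)⁻¹, by positivity, density_helper σ hζ hK ?_⟩
  exact htend.eventually (gt_mem_nhds hlt)

lemma density_top (σ : Measure ℂ) [IsFiniteMeasure σ] (hnull : σ unitCircleᶜ = 0) :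
    ∀ᵐ ζ ∂(σ.singularPart mCircle), ∀ M : ℝ, 0 < M →
      ∀ᶠ δ in 𝓝[>] (0:ℝ), ENNReal.ofReal (M * δ) ≤ σ (Metric.closedBall ζ δ) := by
  set ν := σ.singularPart mCircle with hν
  have hν_le : ν ≤ σ := Measure.singularPart_le σ mCircle
  have hνnull : ν unitCircleᶜ = 0 :=
    le_antisymm (le_trans (hν_le _) (le_of_eq hnull)) zero_le
  filter_upwards [Besicovitch.ae_tendsto_rnDeriv mCircle ν,
    (Measure.mutuallySingular_singularPart σ mCircle).symm.rnDeriv_ae_eq_zero,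
    ae_mem_circle ν hνnull] with ζ htend hzero hζ M hM
  rw [hzero] at htend
  have hK : (0:ℝ) < (2*π*M)⁻¹ := by positivity
  have hev := density_helper ν hζ hK
    (htend.eventually (gt_mem_nhds (ENNReal.ofReal_pos.2 hK)))
  have hMc : (2*π*(2*π*M)⁻¹)⁻¹ = M := by
    rw [mul_inv, inv_inv]
    field_simp
  filter_upwards [hev] with δ hδ
  calc ENNReal.ofReal (M * δ) = ENNReal.ofReal ((2*π*(2*π*M)⁻¹)⁻¹ * δ) := by rw [hMc]
    _ ≤ ν (Metric.closedBall ζ δ) := hδ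
    _ ≤ σ (Metric.closedBall ζ δ) := hν_le _

lemma tendsto_half_one_sub : Tendsto (fun r : ℝ => (1 - r)/2) (𝓝[<] (1:ℝ)) (𝓝[>] (0:ℝ)) := by
  rw [tendsto_nhdsWithin_iff]
  constructor
  · have : Tendsto (fun r : ℝ => (1 - r)/2) (𝓝 1) (𝓝 ((1-1)/2)) := by
      exact ((tendsto_const_nhds.sub tendsto_id).div_const 2)
    simpa using this.mono_left nhdsWithin_le_nhds
  · filter_upwards [self_mem_nhdsWithin] with r (hr : r < 1)
    simp only [Set.mem_Ioi]
    linarith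

lemma eventually_poisson_ge (σ : Measure ℂ) [IsFiniteMeasure σ] (hnull : σ unitCircleᶜ = 0)
    {ζ : ℂ} (hζ : ζ ∈ unitCircle) {c : ℝ} (hc : 0 < c)
    (h : ∀ᶠ δ in 𝓝[>] (0:ℝ), ENNReal.ofReal (c * δ) ≤ σ (Metric.closedBall ζ δ)) :
    ∀ᶠ r : ℝ in 𝓝[<] (1:ℝ), (2/9) * c ≤ poissonIntegral σ ((r:ℂ)*ζ) := by
  have hr1 : ∀ᶠ r in 𝓝[<] (1:ℝ), r ∈ Set.Ioo (0:ℝ) 1 :=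
    Ioo_mem_nhdsLT_of_mem (Set.mem_Ioc.2 (by norm_num))
  filter_upwards [hr1, tendsto_half_one_sub.eventually h] with r hr hb
  have h1r : (0:ℝ) < 1 - r := by linarith [hr.2]
  have hto : c * ((1 - r)/2) ≤ (σ (Metric.closedBall ζ ((1-r)/2))).toReal :=
    (ENNReal.ofReal_le_iff_le_toReal (measure_ne_top σ _)).1 hb
  have hP := poisson_lb σ hnull hζ hr.1 hr.2
  calc (2/9) * c = (c * ((1-r)/2)) * ((4/9) * (1-r)⁻¹) := by field_simp; ring
    _ ≤ (σ (Metric.closedBall ζ ((1-r)/2))).toReal * ((4/9) * (1-r)⁻¹) := by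
        apply mul_le_mul_of_nonneg_right hto; positivity
    _ ≤ poissonIntegral σ ((r:ℂ)*ζ) := hP


lemma mem_unitDisk_of_Ioo {ζ : ℂ} (hζ : ζ ∈ unitCircle) {r : ℝ} (hr : r ∈ Set.Ioo (0:ℝ) 1) :
    ((r:ℂ)*ζ) ∈ unitDisk := by
  have hζ' : ‖ζ‖ = 1 := hζ
  rw [unitDisk, Set.mem_setOf_eq, norm_mul, Complex.norm_real, Real.norm_eq_abs, hζ', mul_one, abs_of_pos hr.1]
  exact hr.2

lemma alpha_sub_pos {I : ℂ → ℂ} {α z : ℂ} (hα : α ∈ unitCircle)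
    (hmaps : Set.MapsTo I unitDisk unitDisk) (hz : z ∈ unitDisk) :
    0 < ‖α - I z‖ := by
  have hIz : ‖I z‖ < 1 := hmaps hz
  rw [norm_pos_iff, sub_ne_zero]
  intro hcontra
  rw [← hcontra, (hα : ‖α‖ = 1)] at hIz
  exact lt_irrefl 1 hIz

lemma radial_of_density_top (I : ℂ → ℂ) (α : ℂ) (hα : α ∈ unitCircle) (σ : Measure ℂ)
    [IsFiniteMeasure σ] (hnull : σ unitCircleᶜ = 0) (hmaps : Set.MapsTo I unitDisk unitDisk)
    (hpoisson : ∀ z ∈ unitDisk, poissonIntegral σ z =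
      (1 - ‖I z‖ ^ 2) / ‖α - I z‖ ^ 2)
    {ζ : ℂ} (hζ : ζ ∈ unitCircle)
    (hM : ∀ M : ℝ, 0 < M → ∀ᶠ δ in 𝓝[>] (0:ℝ),
      ENNReal.ofReal (M * δ) ≤ σ (Metric.closedBall ζ δ)) :
    HasRadialLimit I ζ α := by
  rw [HasRadialLimit, Metric.tendsto_nhds]
  intro ε hε
  have hM' := eventually_poisson_ge σ hnull hζ (show (0:ℝ) < 9/ε^2 by positivity)
    (hM _ (by positivity))
  have hr1 : ∀ᶠ r : ℝ in 𝓝[<] (1:ℝ), r ∈ Set.Ioo (0:ℝ) 1 :=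
    Ioo_mem_nhdsLT_of_mem (Set.mem_Ioc.2 (by norm_num))
  filter_upwards [hM', hr1] with r hP hr
  have hzD := mem_unitDisk_of_Ioo hζ hr
  set z := (r:ℂ)*ζ
  have hIz1 : ‖I z‖ < 1 := hmaps hzD
  have hd0 : 0 < ‖α - I z‖ := alpha_sub_pos hα hmaps hzD
  have hn0 : 0 < 1 - ‖I z‖^2 := by nlinarith [norm_nonneg (I z)]
  have hn1 : 1 - ‖I z‖^2 ≤ 1 := by nlinarith [norm_nonneg (I z)]
  have hPf := hpoisson z hzD
  have h2e : (2:ℝ)/ε^2 ≤ poissonIntegral σ z := by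
    calc (2:ℝ)/ε^2 = (2/9)*(9/ε^2) := by ring
      _ ≤ _ := hP
  have hPpos : (0:ℝ) < poissonIntegral σ z := lt_of_lt_of_le (by positivity) h2e
  have hd2 : ‖α - I z‖^2 = (1 - ‖I z‖^2) / poissonIntegral σ z := by
    rw [hPf]; rw [hPf] at hPpos; field_simp
  have hd2lt : ‖α - I z‖^2 < ε^2 := by
    rw [hd2]
    calc (1 - ‖I z‖^2) / poissonIntegral σ z ≤ 1 / poissonIntegral σ z :=
          div_le_div₀ zero_le_one hn1 hPpos le_rfl
      _ ≤ 1 / ((2:ℝ)/ε^2) := one_div_le_one_div_of_le (by positivity) h2e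
      _ = ε^2/2 := by field_simp
      _ < ε^2 := by nlinarith
  have : ‖α - I z‖ < ε := lt_of_pow_lt_pow_left₀ 2 hε.le hd2lt
  rw [dist_eq_norm]
  rwa [norm_sub_rev] at this

lemma radial_of_lb (I Ib : ℂ → ℂ) (α : ℂ) (hα : α ∈ unitCircle) (σ : Measure ℂ)
    (hpoisson : ∀ z ∈ unitDisk, poissonIntegral σ z =
      (1 - ‖I z‖ ^ 2) / ‖α - I z‖ ^ 2)
    {ζ : ℂ} (hζ : ζ ∈ unitCircle)
    (hrad : HasRadialLimit I ζ (Ib ζ)) (hIb1 : ‖Ib ζ‖ = 1)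
    {c : ℝ} (hc : 0 < c)
    (hlb : ∀ᶠ r : ℝ in 𝓝[<] (1:ℝ), c ≤ poissonIntegral σ ((r:ℂ)*ζ)) :
    HasRadialLimit I ζ α := by
  have hIbα : Ib ζ = α := by
    by_contra hne
    have hdinf : 0 < ‖α - Ib ζ‖ := by
      rw [norm_pos_iff, sub_ne_zero]
      exact fun h => hne h.symm
    have habs : Tendsto (fun r : ℝ => ‖I ((r:ℂ)*ζ)‖)
        (𝓝[<] (1:ℝ)) (𝓝 (‖Ib ζ‖)) :=
      (continuous_norm.tendsto _).comp hrad
    have hnum : Tendsto (fun r : ℝ => 1 - ‖I ((r:ℂ)*ζ)‖^2)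
        (𝓝[<] (1:ℝ)) (𝓝 (1 - ‖Ib ζ‖^2)) :=
      tendsto_const_nhds.sub (habs.pow 2)
    have hden : Tendsto (fun r : ℝ => ‖α - I ((r:ℂ)*ζ)‖^2)
        (𝓝[<] (1:ℝ)) (𝓝 (‖α - Ib ζ‖^2)) :=
      ((continuous_norm.tendsto _).comp (tendsto_const_nhds.sub hrad)).pow 2
    have hPtend : Tendsto (fun r : ℝ =>
        (1 - ‖I ((r:ℂ)*ζ)‖^2) / ‖α - I ((r:ℂ)*ζ)‖^2)
        (𝓝[<] (1:ℝ)) (𝓝 ((1 - ‖Ib ζ‖^2) / ‖α - Ib ζ‖^2)) :=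
      hnum.div hden (by positivity)
    have hzero : (1 - ‖Ib ζ‖^2) / ‖α - Ib ζ‖^2 = 0 := by
      rw [hIb1]; simp
    rw [hzero] at hPtend
    have heq : ∀ᶠ r : ℝ in 𝓝[<] (1:ℝ),
        (1 - ‖I ((r:ℂ)*ζ)‖^2) / ‖α - I ((r:ℂ)*ζ)‖^2 =
          poissonIntegral σ ((r:ℂ)*ζ) := by
      filter_upwards [Ioo_mem_nhdsLT_of_mem (Set.mem_Ioc.2 (by norm_num :
        (1:ℝ) ∈ Set.Ioc (0:ℝ) 1))] with r hr
      exact (hpoisson _ (mem_unitDisk_of_Ioo hζ hr)).symm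
    have hPtend' : Tendsto (fun r : ℝ => poissonIntegral σ ((r:ℂ)*ζ)) (𝓝[<] (1:ℝ)) (𝓝 0) :=
      hPtend.congr' heq
    have := ge_of_tendsto hPtend' hlb
    linarith
  rw [← hIbα]; exact hrad



/-- `I` has radial limit `α` at `σ_α`-almost every point of the circle. -/
theorem radial_limit_eq_alpha_clark_ae (I Ib : ℂ → ℂ) (hI : IsInner I Ib)
    (α : ℂ) (hα : α ∈ unitCircle) (σ : Measure ℂ) (hσ : IsClarkMeasure I α σ) :
    ∀ᵐ ζ ∂σ, HasRadialLimit I ζ α := by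
  obtain ⟨hfin, hnull, hpoisson⟩ := hσ
  haveI := hfin
  obtain ⟨-, hmaps, hbdry⟩ := hI
  have hdec : σ.singularPart mCircle + mCircle.withDensity (σ.rnDeriv mCircle) = σ :=
    (σ.haveLebesgueDecomposition_add mCircle).symm
  rw [← hdec, ae_add_measure_iff]
  constructor
  · have hνnull : σ.singularPart mCircle unitCircleᶜ = 0 :=
      le_antisymm (le_trans (Measure.singularPart_le σ mCircle _) (le_of_eq hnull)) zero_le
    filter_upwards [density_top σ hnull, ae_mem_circle _ hνnull] with ζ hM hζ
    exact radial_of_density_top I α hα σ hnull hmaps hpoisson hζ hM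
  · have hac : mCircle.withDensity (σ.rnDeriv mCircle) ≪ mCircle :=
      withDensity_absolutelyContinuous _ _
    have hle : mCircle.withDensity (σ.rnDeriv mCircle) ≤ σ :=
      Measure.withDensity_rnDeriv_le σ mCircle
    have hacσ : mCircle.withDensity (σ.rnDeriv mCircle) ≪ σ :=
      Measure.absolutelyContinuous_of_le hle
    filter_upwards [hac.ae_le hbdry, hacσ.ae_le (density_lb σ hnull),
      hacσ.ae_le (ae_mem_circle σ hnull)] with ζ hb hcev hζ
    obtain ⟨hrad, hIb1⟩ := hb
    obtain ⟨c, hc, hcev⟩ := hcev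
    exact radial_of_lb I Ib α hα σ hpoisson hζ hrad hIb1 (by positivity : (0:ℝ) < (2/9)*c)
      (eventually_poisson_ge σ hnull hζ hc hcev)
end
end

section
/- Let I : 𝔻 → 𝔻 be an inner function with I(0) = 0. Then I, viewed as a measurable map from 𝕋 to 𝕋 via its radial boundary values, is measure-preserving for normalized Lebesgue measure: for every Borel set Q ⊆ 𝕋, the Lebesgue measure of I⁻¹(Q) = {ζ ∈ 𝕋 : I(ζ) ∈ Q} equals the Lebesgue measure of Q. -/
open MeasureTheory Complex Filter Real Set

noncomputable section

namespace IMP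
open Topology


lemma unitDisk_eq : unitDisk = Metric.ball (0:ℂ) 1 := by
  ext z; simp [unitDisk, Metric.mem_ball, Complex.dist_eq]

lemma isClosed_unitCircle : IsClosed unitCircle :=
  isClosed_eq continuous_norm continuous_const

lemma measurableSet_unitCircle : MeasurableSet unitCircle :=
  isClosed_unitCircle.measurableSet

lemma measurable_expI : Measurable (fun θ : ℝ => Complex.exp (θ * Complex.I)) := by
  fun_prop

lemma expI_mem (θ : ℝ) : Complex.exp (θ * Complex.I) ∈ unitCircle := by
  simp [unitCircle, Complex.norm_exp]

lemma mCircle_compl : mCircle unitCircleᶜ = 0 := by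
  rw [mCircle]
  simp only [Measure.smul_apply, smul_eq_mul]
  rw [Measure.map_apply measurable_expI (measurableSet_unitCircle.compl)]
  have : (fun θ : ℝ => Complex.exp (θ * Complex.I)) ⁻¹' unitCircleᶜ = ∅ := by
    ext θ; simp [expI_mem θ]
  simp [this]

lemma ae_mem_circle : ∀ᵐ ζ ∂mCircle, ζ ∈ unitCircle := by
  rw [ae_iff]
  exact mCircle_compl

instance : IsProbabilityMeasure mCircle := by
  constructor
  rw [mCircle]
  simp only [Measure.smul_apply, smul_eq_mul]
  rw [Measure.map_apply measurable_expI MeasurableSet.univ]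
  simp only [Set.preimage_univ, Measure.restrict_apply_univ, Real.volume_Ioc, sub_zero]
  rw [ENNReal.inv_mul_cancel] <;>
    simp [ENNReal.ofReal_eq_zero, not_le.mpr Real.two_pi_pos, Real.pi_pos, ENNReal.mul_eq_top]

lemma integral_mCircle {f : ℂ → ℂ}
    (hf : AEStronglyMeasurable f (Measure.map (fun θ : ℝ => Complex.exp (θ * Complex.I))
      (volume.restrict (Set.Ioc 0 (2 * π))))) :
    ∫ z, f z ∂mCircle = (2*π)⁻¹ • ∫ θ in Set.Ioc 0 (2*π), f (Complex.exp (θ * Complex.I)) := by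
  rw [mCircle, integral_smul_measure, integral_map measurable_expI.aemeasurable hf,
    ENNReal.toReal_inv, ENNReal.toReal_ofReal (by positivity)]




-- moments of mCircle in θ-coordinates
lemma theta_moment (n : ℕ) (hn : n ≠ 0) :
    ∫ θ in Set.Ioc 0 (2*π), (Complex.exp (θ * Complex.I)) ^ n = 0 := by
  rw [← intervalIntegral.integral_of_le (by positivity)]
  have h : ∀ θ : ℝ, (Complex.exp (θ * Complex.I)) ^ n
      = Complex.exp ((n * Complex.I) * θ) := by
    intro θ
    rw [← Complex.exp_nat_mul]
    ring_nf
  simp_rw [h]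
  rw [integral_exp_mul_complex (by simp [hn, Complex.I_ne_zero])]
  have h3 : Complex.exp ((n:ℂ) * Complex.I * ((2*π:ℝ):ℂ)) = 1 := by
    have h2 : ((n:ℂ) * Complex.I) * ((2*π:ℝ):ℂ) = ((n:ℤ):ℂ) * (2 * ↑π * Complex.I) := by
      push_cast; ring
    rw [h2, Complex.exp_int_mul_two_pi_mul_I]
  rw [h3]
  simp

-- mean value property
lemma meanvalue {g : ℂ → ℂ} (hg : DifferentiableOn ℂ g unitDisk) {r : ℝ}
    (h0 : 0 < r) (h1 : r < 1) :
    ∫ θ in Set.Ioc 0 (2*π), g ((r:ℂ) * Complex.exp (θ * Complex.I)) = (2*π : ℂ) * g 0 := by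
  have hsub : Metric.closedBall (0:ℂ) r ⊆ unitDisk := by
    rw [unitDisk_eq]
    exact Metric.closedBall_subset_ball h1
  have hd : DiffContOnCl ℂ g (Metric.ball 0 r) := by
    refine ⟨hg.mono ?_, (hg.continuousOn).mono ?_⟩
    · exact (Metric.ball_subset_closedBall).trans hsub
    · rw [closure_ball (0:ℂ) h0.ne']
      exact hsub
  have key := hd.circleIntegral_sub_inv_smul (Metric.mem_ball_self h0)
  have hform : (∮ z in C(0, r), (z - 0)⁻¹ • g z)
      = Complex.I * ∫ θ in (0:ℝ)..(2*π), g ((r:ℂ) * Complex.exp (θ * Complex.I)) := by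
    rw [circleIntegral]
    rw [← intervalIntegral.integral_const_mul]
    apply intervalIntegral.integral_congr
    intro θ _
    have hne : circleMap 0 r θ ≠ 0 := circleMap_ne_center h0.ne'
    simp only [deriv_circleMap, smul_eq_mul, sub_zero]
    have hr : (r:ℂ) ≠ 0 := by exact_mod_cast h0.ne'
    have he : Complex.exp (↑θ * Complex.I) ≠ 0 := Complex.exp_ne_zero _
    simp only [circleMap, zero_add]
    field_simp
  rw [hform] at key
  have : ∫ θ in (0:ℝ)..(2*π), g ((r:ℂ) * Complex.exp (θ * Complex.I))
      = (2*π:ℂ) * g 0 := by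
    have h4 : (2 * (π:ℂ) * Complex.I) • g 0 = Complex.I * ((2*π:ℂ) * g 0) := by
      simp only [smul_eq_mul]; ring
    rw [h4] at key
    exact mul_left_cancel₀ Complex.I_ne_zero key
  rw [← this, intervalIntegral.integral_of_le (by positivity)]


lemma aesm_map_of_mCircle {f : ℂ → ℂ} (hf : AEStronglyMeasurable f mCircle) :
    AEStronglyMeasurable f (Measure.map (fun θ : ℝ => Complex.exp (θ * Complex.I))
      (volume.restrict (Set.Ioc 0 (2 * π)))) := by
  obtain ⟨g, hg, hfg⟩ := hf
  refine ⟨g, hg, ?_⟩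
  rwa [Filter.EventuallyEq, mCircle, Measure.ae_ennreal_smul_measure_eq
    (by simp [ENNReal.inv_ne_zero, ENNReal.mul_eq_top])] at hfg

lemma aesm_of_continuousOn {f : ℂ → ℂ} (hf : ContinuousOn f unitCircle) :
    AEStronglyMeasurable f mCircle := by
  have h : AEMeasurable f (mCircle.restrict unitCircle) :=
    hf.aemeasurable measurableSet_unitCircle
  rw [Measure.restrict_eq_self_of_ae_mem ae_mem_circle] at h
  exact h.aestronglyMeasurable

lemma Ib_moment {I Ib : ℂ → ℂ} (hd : DifferentiableOn ℂ I unitDisk)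
    (hmap : Set.MapsTo I unitDisk unitDisk)
    (hae : ∀ᵐ ζ ∂mCircle, HasRadialLimit I ζ (Ib ζ) ∧ ‖Ib ζ‖ = 1)
    (h0 : I 0 = 0) (n : ℕ) (hn : n ≠ 0) :
    ∫ ζ, (Ib ζ) ^ n ∂mCircle = 0 := by
  set r : ℕ → ℝ := fun k => 1 - 1/(k+2) with hrdef
  have hr0 : ∀ k, 0 < r k := by
    intro k
    have : 1/((k:ℝ)+2) < 1 := by
      rw [div_lt_one (by positivity)]
      linarith [Nat.cast_nonneg (α := ℝ) k]
    simp only [hrdef]; linarith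
  have hr1 : ∀ k, r k < 1 := by
    intro k
    have : 0 < 1/((k:ℝ)+2) := by positivity
    simp only [hrdef]; linarith
  have hrt : Tendsto r atTop (nhdsWithin 1 (Set.Iio 1)) := by
    apply tendsto_nhdsWithin_of_tendsto_nhds_of_eventually_within
    · have h2 : Tendsto (fun k : ℕ => (k:ℝ)+2) atTop atTop :=
        tendsto_natCast_atTop_atTop.atTop_add tendsto_const_nhds
      have h3 := h2.inv_tendsto_atTop
      have h4 : Tendsto r atTop (𝓝 (1 - 0)) := by
        apply Tendsto.const_sub
        exact h3.congr fun k => (one_div _).symm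
      simpa using h4
    · exact Filter.Eventually.of_forall fun k => hr1 k
  have hcont : ∀ k, ContinuousOn (fun ζ => (I ((r k : ℂ) * ζ))^n) unitCircle := by
    intro k
    apply ContinuousOn.pow
    apply hd.continuousOn.comp ((continuous_const.mul continuous_id).continuousOn)
    intro ζ hζ
    simp only [unitDisk, unitCircle, Set.mem_setOf_eq, id_eq] at *
    rw [show (((fun _ => (r k : ℂ)) * id : ℂ → ℂ)) ζ = (r k : ℂ) * ζ from rfl, norm_mul, hζ, mul_one]
    rw [Complex.norm_real, Real.norm_eq_abs, abs_of_pos (hr0 k)]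
    exact hr1 k
  have hmem : ∀ k (ζ : ℂ), ζ ∈ unitCircle → ((r k : ℂ) * ζ) ∈ unitDisk := by
    intro k ζ hζ
    simp only [unitDisk, unitCircle, Set.mem_setOf_eq] at *
    rw [norm_mul, hζ, mul_one, Complex.norm_real, Real.norm_eq_abs, abs_of_pos (hr0 k)]
    exact hr1 k
  have hInt0 : ∀ k, ∫ ζ, (I ((r k : ℂ) * ζ))^n ∂mCircle = 0 := by
    intro k
    rw [integral_mCircle (aesm_map_of_mCircle (aesm_of_continuousOn (hcont k)))]
    have hmv := meanvalue (g := fun z => (I z)^n) (hd.pow n) (hr0 k) (hr1 k)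
    rw [hmv]
    simp [h0, zero_pow hn]
  have hten : Tendsto (fun k => ∫ ζ, (I ((r k : ℂ) * ζ))^n ∂mCircle) atTop
      (𝓝 (∫ ζ, (Ib ζ)^n ∂mCircle)) := by
    apply tendsto_integral_of_dominated_convergence (bound := fun _ => (1:ℝ))
    · exact fun k => aesm_of_continuousOn (hcont k)
    · exact integrable_const 1
    · intro k
      filter_upwards [ae_mem_circle] with ζ hζ
      have := hmap (hmem k ζ hζ)
      simp only [unitDisk, Set.mem_setOf_eq] at this
      calc ‖(I ((r k : ℂ) * ζ))^n‖ = (‖I ((r k : ℂ) * ζ)‖)^n := by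
            simp [norm_pow]
        _ ≤ 1 := pow_le_one₀ (norm_nonneg _) this.le
    · filter_upwards [hae] with ζ hζ
      exact (hζ.1.comp hrt).pow n
  simp_rw [hInt0] at hten
  exact tendsto_nhds_unique hten tendsto_const_nhds

lemma integrable_of_ae_bound {f : ℂ → ℂ} (hf : AEStronglyMeasurable f mCircle)
    {C : ℝ} (h : ∀ᵐ ζ ∂mCircle, ‖f ζ‖ ≤ C) : Integrable f mCircle :=
  ⟨hf, HasFiniteIntegral.of_bounded h⟩

lemma mCircle_moment (n : ℕ) (hn : n ≠ 0) : ∫ z, z^n ∂mCircle = 0 := by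
  rw [integral_mCircle ((continuous_pow n).aestronglyMeasurable)]
  rw [theta_moment n hn, smul_zero]

lemma integral_one_mCircle : ∫ (_ : ℂ), (1:ℂ) ∂mCircle = 1 := by
  simp

lemma monom_integral {φ : ℂ → ℂ} (hφ : Measurable φ)
    (h1 : ∀ᵐ ζ ∂mCircle, ‖φ ζ‖ = 1)
    (hmom : ∀ n : ℕ, n ≠ 0 → ∫ ζ, (φ ζ)^n ∂mCircle = 0) (j k : ℕ) :
    ∫ ζ, (φ ζ)^j * (starRingEnd ℂ (φ ζ))^k ∂mCircle = if j = k then 1 else 0 := by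
  have hunit : ∀ᵐ ζ ∂mCircle, φ ζ * starRingEnd ℂ (φ ζ) = 1 := by
    filter_upwards [h1] with ζ h
    rw [Complex.mul_conj, Complex.normSq_eq_norm_sq, h]
    simp
  have hconjmom : ∀ n : ℕ, n ≠ 0 → ∫ ζ, (starRingEnd ℂ (φ ζ))^n ∂mCircle = 0 := by
    intro n hn
    calc ∫ ζ, (starRingEnd ℂ (φ ζ))^n ∂mCircle
        = ∫ ζ, starRingEnd ℂ ((φ ζ)^n) ∂mCircle := by simp [map_pow]
      _ = starRingEnd ℂ (∫ ζ, (φ ζ)^n ∂mCircle) := integral_conj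
      _ = 0 := by rw [hmom n hn]; simp
  rcases lt_trichotomy j k with h | h | h
  · have he : (fun ζ => (φ ζ)^j * (starRingEnd ℂ (φ ζ))^k) =ᵐ[mCircle]
        (fun ζ => (starRingEnd ℂ (φ ζ))^(k-j)) := by
      filter_upwards [hunit] with ζ hζ
      have h2 : (φ ζ)^j * (starRingEnd ℂ (φ ζ))^k
          = (φ ζ * starRingEnd ℂ (φ ζ))^j * (starRingEnd ℂ (φ ζ))^(k-j) := by
        rw [mul_pow, mul_assoc, ← pow_add]
        congr 2
        omega
      rw [h2, hζ, one_pow, one_mul]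
    rw [integral_congr_ae he, if_neg h.ne, hconjmom (k-j) (by omega)]
  · subst h
    have he : (fun ζ => (φ ζ)^j * (starRingEnd ℂ (φ ζ))^j) =ᵐ[mCircle]
        (fun _ => (1:ℂ)) := by
      filter_upwards [hunit] with ζ hζ
      rw [← mul_pow, hζ, one_pow]
    rw [integral_congr_ae he, if_pos rfl, integral_one_mCircle]
  · have he : (fun ζ => (φ ζ)^j * (starRingEnd ℂ (φ ζ))^k) =ᵐ[mCircle]
        (fun ζ => (φ ζ)^(j-k)) := by
      filter_upwards [hunit] with ζ hζ
      have hjk : j = k + (j - k) := by omega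
      have h2 : (φ ζ)^j * (starRingEnd ℂ (φ ζ))^k
          = (φ ζ * starRingEnd ℂ (φ ζ))^k * (φ ζ)^(j-k) := by
        calc (φ ζ)^j * (starRingEnd ℂ (φ ζ))^k
            = (φ ζ)^(k+(j-k)) * (starRingEnd ℂ (φ ζ))^k := by rw [← hjk]
          _ = (φ ζ * starRingEnd ℂ (φ ζ))^k * (φ ζ)^(j-k) := by
              rw [pow_add, mul_pow]; ring
      rw [h2, hζ, one_pow, one_mul]
    rw [integral_congr_ae he, if_neg h.ne', hmom (j-k) (by omega)]

lemma unitCircle_eq : unitCircle = Metric.sphere (0:ℂ) 1 := by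
  ext z; simp [unitCircle, Complex.dist_eq]

instance : CompactSpace ↥unitCircle :=
  isCompact_iff_compactSpace.mp (unitCircle_eq ▸ isCompact_sphere (0:ℂ) 1)

/-- Extend a continuous function on the circle by zero. -/
def EK (f : C(↥unitCircle, ℂ)) : ℂ → ℂ :=
  Function.extend Subtype.val ⇑f (fun _ => (0:ℂ))

lemma EK_apply_mem (f : C(↥unitCircle, ℂ)) {z : ℂ} (h : z ∈ unitCircle) :
    EK f z = f ⟨z, h⟩ :=
  Subtype.val_injective.extend_apply ⇑f _ ⟨z, h⟩

lemma EK_apply_not_mem (f : C(↥unitCircle, ℂ)) {z : ℂ} (h : z ∉ unitCircle) :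
    EK f z = 0 :=
  Function.extend_apply' _ _ _ (by rintro ⟨a, rfl⟩; exact h a.2)

lemma measurable_EK (f : C(↥unitCircle, ℂ)) : Measurable (EK f) :=
  (MeasurableEmbedding.subtype_coe measurableSet_unitCircle).measurable_extend
    f.continuous.measurable measurable_const

lemma norm_EK_le (f : C(↥unitCircle, ℂ)) (z : ℂ) : ‖EK f z‖ ≤ ‖f‖ := by
  by_cases h : z ∈ unitCircle
  · rw [EK_apply_mem f h]; exact f.norm_coe_le_norm _
  · rw [EK_apply_not_mem f h]; simp [norm_nonneg]

lemma integrable_EK (ν : Measure ℂ) [IsFiniteMeasure ν] (f : C(↥unitCircle, ℂ)) :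
    Integrable (EK f) ν :=
  ⟨(measurable_EK f).aestronglyMeasurable,
    HasFiniteIntegral.of_bounded (C := ‖f‖) (Filter.Eventually.of_forall (norm_EK_le f))⟩

lemma EK_add (f g : C(↥unitCircle, ℂ)) : EK (f + g) = EK f + EK g := by
  funext z
  by_cases h : z ∈ unitCircle
  · simp [EK_apply_mem _ h]
  · simp [EK_apply_not_mem _ h]

lemma EK_smul (c : ℂ) (f : C(↥unitCircle, ℂ)) : EK (c • f) = c • EK f := by
  funext z
  by_cases h : z ∈ unitCircle
  · simp [EK_apply_mem _ h]
  · simp [EK_apply_not_mem _ h]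

lemma EK_zero : EK 0 = 0 := by
  funext z
  by_cases h : z ∈ unitCircle
  · simp [EK_apply_mem _ h]
  · simp [EK_apply_not_mem _ h]

lemma continuous_Phi (ν : Measure ℂ) [IsProbabilityMeasure ν] :
    Continuous (fun f : C(↥unitCircle, ℂ) => ∫ z, EK f z ∂ν) := by
  refine (LipschitzWith.of_dist_le_mul (K := 1) ?_).continuous
  intro f g
  rw [dist_eq_norm, ← integral_sub (integrable_EK ν f) (integrable_EK ν g)]
  have hb : ∀ z, ‖EK f z - EK g z‖ ≤ dist f g := by
    intro z
    by_cases h : z ∈ unitCircle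
    · rw [EK_apply_mem _ h, EK_apply_mem _ h, ← dist_eq_norm]
      exact ContinuousMap.dist_apply_le_dist _
    · simp [EK_apply_not_mem _ h, dist_nonneg]
  calc ‖∫ z, (EK f z - EK g z) ∂ν‖ ≤ dist f g * (ν Set.univ).toReal :=
        norm_integral_le_of_norm_le_const (Filter.Eventually.of_forall hb)
    _ = 1 * dist f g := by simp [measure_univ, mul_comm]

lemma EK_monomial (j k : ℕ) :
    EK ((Polynomial.toContinuousMapOnAlgHom unitCircle Polynomial.X) ^ j *
        (star (Polynomial.toContinuousMapOnAlgHom unitCircle Polynomial.X)) ^ k)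
      = Set.indicator unitCircle (fun z => z ^ j * (starRingEnd ℂ z) ^ k) := by
  funext z
  by_cases h : z ∈ unitCircle
  · rw [EK_apply_mem _ h, Set.indicator_of_mem h]
    simp [Polynomial.toContinuousMapOnAlgHom_apply, Polynomial.toContinuousMapOn_apply,
      Polynomial.toContinuousMap_apply]
  · rw [EK_apply_not_mem _ h, Set.indicator_of_notMem h]

lemma Phi_eq_of_monomials (μ ν : Measure ℂ) [IsProbabilityMeasure μ] [IsProbabilityMeasure ν]
    (hmono : ∀ j k : ℕ,
      ∫ z, Set.indicator unitCircle (fun w => w ^ j * (starRingEnd ℂ w) ^ k) z ∂μ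
        = ∫ z, Set.indicator unitCircle (fun w => w ^ j * (starRingEnd ℂ w) ^ k) z ∂ν) :
    ∀ f : C(↥unitCircle, ℂ), ∫ z, EK f z ∂μ = ∫ z, EK f z ∂ν := by
  set x : C(↥unitCircle, ℂ) := Polynomial.toContinuousMapOnAlgHom unitCircle Polynomial.X with hx
  set C := {f : C(↥unitCircle, ℂ) | ∫ z, EK f z ∂μ = ∫ z, EK f z ∂ν} with hC
  have hCclosed : IsClosed C := isClosed_eq (continuous_Phi μ) (continuous_Phi ν)
  have hmonom : ∀ j k : ℕ, (x ^ j * (star x) ^ k) ∈ C := by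
    intro j k
    simp only [hC, Set.mem_setOf_eq]
    rw [EK_monomial j k]
    exact hmono j k
  have hspan : ∀ f, f ∈ (polynomialFunctions unitCircle).starClosure → f ∈ C := by
    intro f hf
    rw [polynomialFunctions.starClosure_eq_adjoin_X] at hf
    have hf' : f ∈ Submodule.span ℂ
        (↑(Submonoid.closure (({x} : Set C(↥unitCircle, ℂ)) ∪ star {x}))) := by
      rw [← StarAlgebra.adjoin_eq_span]
      exact hf
    refine Submodule.span_induction ?_ ?_ ?_ ?_ hf'
    · intro y hy
      -- y in the monoid closure: y = x^j * (star x)^k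
      have : ∃ j k : ℕ, y = x ^ j * (star x) ^ k := by
        refine Submonoid.closure_induction ?_ ?_ ?_ hy
        · rintro w (hw | hw)
          · exact ⟨1, 0, by simp [Set.mem_singleton_iff.mp hw]⟩
          · rw [Set.star_singleton, Set.mem_singleton_iff] at hw
            exact ⟨0, 1, by simp [hw]⟩
        · exact ⟨0, 0, by simp⟩
        · rintro a b _ _ ⟨j₁, k₁, rfl⟩ ⟨j₂, k₂, rfl⟩
          exact ⟨j₁ + j₂, k₁ + k₂, by rw [pow_add, pow_add]; ring⟩
      obtain ⟨j, k, rfl⟩ := this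
      exact hmonom j k
    · simp only [hC, Set.mem_setOf_eq, EK_zero]
      simp
    · intro a b _ _ ha hb
      simp only [hC, Set.mem_setOf_eq, EK_add, Pi.add_apply] at *
      rw [integral_add (integrable_EK μ a) (integrable_EK μ b),
        integral_add (integrable_EK ν a) (integrable_EK ν b), ha, hb]
    · intro c a _ ha
      simp only [hC, Set.mem_setOf_eq, EK_smul, Pi.smul_apply] at *
      rw [integral_smul, integral_smul, ha]
  intro f
  have hmem : f ∈ closure (↑(polynomialFunctions unitCircle).starClosure :
      Set C(↥unitCircle, ℂ)) := by
    rw [← StarSubalgebra.topologicalClosure_coe,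
      polynomialFunctions.starClosure_topologicalClosure]
    trivial
  exact closure_minimal hspan hCclosed hmem

end IMP

/-- an inner function vanishing at the origin is measure-preserving on the
circle (via its boundary values). -/
theorem inner_measurePreserving (I Ib : ℂ → ℂ) (hI : IsInner I Ib) (h0 : I 0 = 0)
    (hIb : Measurable Ib) :
    ∀ Q : Set ℂ, MeasurableSet Q → Q ⊆ unitCircle → mCircle (Ib ⁻¹' Q) = mCircle Q := by
  obtain ⟨hd, hmap, hae⟩ := hI
  have habs : ∀ᵐ ζ ∂mCircle, ‖Ib ζ‖ = 1 := hae.mono fun ζ h => h.2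
  have haemem : ∀ᵐ ζ ∂mCircle, Ib ζ ∈ unitCircle := habs.mono fun ζ h => h
  set μ : Measure ℂ := Measure.map Ib mCircle with hμ
  have hprob : IsProbabilityMeasure μ := Measure.isProbabilityMeasure_map hIb.aemeasurable
  have hmemμ : ∀ᵐ z ∂μ, z ∈ unitCircle := by
    rw [ae_iff]
    rw [show {a : ℂ | ¬ a ∈ unitCircle} = unitCircleᶜ from rfl, hμ,
      Measure.map_apply hIb IMP.measurableSet_unitCircle.compl]
    rw [ae_iff] at haemem
    exact haemem
  have hmom : ∀ n : ℕ, n ≠ 0 → ∫ ζ, (Ib ζ)^n ∂mCircle = 0 := IMP.Ib_moment hd hmap hae h0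
  have hmonoIb := IMP.monom_integral hIb habs hmom
  have hmonoId := IMP.monom_integral measurable_id IMP.ae_mem_circle
    (fun n hn => IMP.mCircle_moment n hn)
  have hgmeas : ∀ j k : ℕ, Measurable (fun w : ℂ => w^j * (starRingEnd ℂ w)^k) := by
    intro j k
    exact (measurable_id.pow_const j).mul
      ((Complex.continuous_conj.measurable).pow_const k)
  have hmono : ∀ j k : ℕ,
      ∫ z, Set.indicator unitCircle (fun w => w ^ j * (starRingEnd ℂ w) ^ k) z ∂μ
        = ∫ z, Set.indicator unitCircle (fun w => w ^ j * (starRingEnd ℂ w) ^ k) z ∂mCircle := by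
    intro j k
    have hind : StronglyMeasurable
        (Set.indicator unitCircle (fun w : ℂ => w^j * (starRingEnd ℂ w)^k)) :=
      ((hgmeas j k).indicator IMP.measurableSet_unitCircle).stronglyMeasurable
    have hL : ∫ z, Set.indicator unitCircle (fun w => w ^ j * (starRingEnd ℂ w) ^ k) z ∂μ
        = if j = k then 1 else 0 := by
      rw [hμ, integral_map hIb.aemeasurable hind.aestronglyMeasurable]
      rw [integral_congr_ae (g := fun ζ => (Ib ζ)^j * (starRingEnd ℂ (Ib ζ))^k)
        (haemem.mono fun ζ hζ => Set.indicator_of_mem hζ _)]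
      exact hmonoIb j k
    have hR : ∫ z, Set.indicator unitCircle (fun w => w ^ j * (starRingEnd ℂ w) ^ k) z ∂mCircle
        = if j = k then 1 else 0 := by
      rw [integral_congr_ae (g := fun z => z^j * (starRingEnd ℂ z)^k)
        (IMP.ae_mem_circle.mono fun z hz => Set.indicator_of_mem hz _)]
      exact hmonoId j k
    rw [hL, hR]
  have hPhi := IMP.Phi_eq_of_monomials μ mCircle hmono
  have hmeas_eq : μ = mCircle := by
    apply ext_of_forall_lintegral_eq_of_IsFiniteMeasure
    intro g
    have hcont : Continuous (fun z : ↥unitCircle => ((g (z:ℂ) : ℝ) : ℂ)) :=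
      Complex.continuous_ofReal.comp (NNReal.continuous_coe.comp
        (g.continuous.comp continuous_subtype_val))
    set f : C(↥unitCircle, ℂ) := ⟨fun z => ((g (z:ℂ) : ℝ) : ℂ), hcont⟩ with hf
    have hEK : IMP.EK f = Set.indicator unitCircle (fun z => ((g z : ℝ) : ℂ)) := by
      funext z
      by_cases h : z ∈ unitCircle
      · rw [IMP.EK_apply_mem _ h, Set.indicator_of_mem h]
        rfl
      · rw [IMP.EK_apply_not_mem _ h, Set.indicator_of_notMem h]
    have h1 := hPhi f
    rw [hEK] at h1
    rw [integral_congr_ae (hmemμ.mono fun z hz => Set.indicator_of_mem hz _),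
      integral_congr_ae (IMP.ae_mem_circle.mono fun z hz => Set.indicator_of_mem hz _)] at h1
    set G : ℂ → ℝ := fun z => ((g z : ℝ)) with hG
    have h1' : ∫ z, (G z : ℂ) ∂μ = ∫ z, (G z : ℂ) ∂mCircle := h1
    have h6 : ∫ z, G z ∂μ = ∫ z, G z ∂mCircle := by
      apply Complex.ofReal_injective
      calc ((∫ z, G z ∂μ : ℝ) : ℂ) = ∫ z, (G z : ℂ) ∂μ := (integral_ofReal (𝕜 := ℂ)).symm
        _ = ∫ z, (G z : ℂ) ∂mCircle := h1'
        _ = ((∫ z, G z ∂mCircle : ℝ) : ℂ) := integral_ofReal (𝕜 := ℂ)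
    obtain ⟨Cb, hCb⟩ := g.bounded
    have hbound : ∀ z : ℂ, ‖G z‖ ≤ (g 0 : ℝ) + Cb := by
      intro z
      have h := hCb z 0
      rw [NNReal.dist_eq] at h
      have h2 : ((g z):ℝ) - ((g 0):ℝ) ≤ Cb := (le_abs_self _).trans h
      rw [hG, Real.norm_eq_abs, _root_.abs_of_nonneg (g z).coe_nonneg]
      linarith
    have hgint : ∀ (ν : Measure ℂ), IsFiniteMeasure ν → Integrable G ν := by
      intro ν hν
      exact ⟨(NNReal.continuous_coe.comp g.continuous).aestronglyMeasurable,
        HasFiniteIntegral.of_bounded (C := (g 0 : ℝ) + Cb) (Filter.Eventually.of_forall hbound)⟩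
    rw [lintegral_coe_eq_integral _ (hgint μ inferInstance),
      lintegral_coe_eq_integral _ (hgint mCircle inferInstance)]
    rw [show (fun z => ((g z : ℝ))) = G from rfl, h6]
  intro Q hQ _
  calc mCircle (Ib ⁻¹' Q) = μ Q := (Measure.map_apply hIb hQ).symm
    _ = mCircle Q := by rw [hmeas_eq]
end
end

section
/- Let I : 𝔻 → 𝔻 be an inner function, α ∈ 𝕋, and σ_α its Clark measure. Then for all z, w ∈ 𝔻, ∫_𝕋 (1/(1 - z·conj(ζ))) · (1/(1 - ζ·conj(w))) dσ_α(ζ) = ((1 - I(z)·conj(I(w))) / ((1 - conj(α)·I(z))(1 - α·conj(I(w))))) · (1/(1 - z·conj(w))). -/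
open MeasureTheory Complex Filter Real Set

noncomputable section

local notation "conj'" => starRingEnd ℂ

lemma hasFDerivAt_integrand (ζ : ℂ) (x : ℂ × ℂ) (h1 : 1 - x.1 * conj' ζ ≠ 0)
    (h2 : 1 - ζ * x.2 ≠ 0) :
    HasFDerivAt (fun q : ℂ × ℂ => (1 - q.1 * conj' ζ)⁻¹ * (1 - ζ * q.2)⁻¹)
      ((conj' ζ * ((1 - x.1 * conj' ζ) ^ 2)⁻¹ * (1 - ζ * x.2)⁻¹) • ContinuousLinearMap.fst ℂ ℂ ℂ
        + (ζ * (1 - x.1 * conj' ζ)⁻¹ * ((1 - ζ * x.2) ^ 2)⁻¹) • ContinuousLinearMap.snd ℂ ℂ ℂ)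
      x := by
  have ha : HasFDerivAt (fun q : ℂ × ℂ => 1 - q.1 * conj' ζ)
      (-(conj' ζ • ContinuousLinearMap.fst ℂ ℂ ℂ)) x :=
    (hasFDerivAt_fst.mul_const (conj' ζ)).const_sub 1
  have hb : HasFDerivAt (fun q : ℂ × ℂ => 1 - ζ * q.2)
      (-(ζ • ContinuousLinearMap.snd ℂ ℂ ℂ)) x :=
    (hasFDerivAt_snd.const_mul ζ).const_sub 1
  have hainv := (hasDerivAt_inv h1).comp_hasFDerivAt x ha
  have hbinv := (hasDerivAt_inv h2).comp_hasFDerivAt x hb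
  have h := hainv.mul hbinv
  refine h.congr_fderiv ?_
  ext v <;> simp <;> ring

lemma norm_deriv_le (ζ : ℂ) (x : ℂ × ℂ) {δ : ℝ} (hδ : 0 < δ) (hζ : ‖ζ‖ = 1)
    (hb1 : δ ≤ ‖1 - x.1 * conj' ζ‖) (hb2 : δ ≤ ‖1 - ζ * x.2‖) :
    ‖(conj' ζ * ((1 - x.1 * conj' ζ) ^ 2)⁻¹ * (1 - ζ * x.2)⁻¹) • ContinuousLinearMap.fst ℂ ℂ ℂ
      + (ζ * (1 - x.1 * conj' ζ)⁻¹ * ((1 - ζ * x.2) ^ 2)⁻¹) • ContinuousLinearMap.snd ℂ ℂ ℂ‖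
      ≤ 2 * (δ⁻¹) ^ 3 := by
  set A := ‖1 - x.1 * conj' ζ‖ with hA
  set B := ‖1 - ζ * x.2‖ with hB
  have hA0 : 0 < A := lt_of_lt_of_le hδ hb1
  have hB0 : 0 < B := lt_of_lt_of_le hδ hb2
  have hiA : A⁻¹ ≤ δ⁻¹ := inv_anti₀ hδ hb1
  have hiB : B⁻¹ ≤ δ⁻¹ := inv_anti₀ hδ hb2
  have hδi : (0:ℝ) ≤ δ⁻¹ := by positivity
  have hc1 : ‖conj' ζ * ((1 - x.1 * conj' ζ) ^ 2)⁻¹ * (1 - ζ * x.2)⁻¹‖ ≤ (δ⁻¹) ^ 3 := by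
    have : ‖conj' ζ * ((1 - x.1 * conj' ζ) ^ 2)⁻¹ * (1 - ζ * x.2)⁻¹‖
        = (A⁻¹) ^ 2 * B⁻¹ := by
      simp [norm_mul, norm_inv, norm_pow, hζ, ← hA, ← hB, inv_pow]
    rw [this]
    calc (A⁻¹) ^ 2 * B⁻¹ ≤ (δ⁻¹) ^ 2 * δ⁻¹ := by
          apply mul_le_mul (pow_le_pow_left₀ (by positivity) hiA 2) hiB (by positivity) (by positivity)
      _ = (δ⁻¹) ^ 3 := by ring
  have hc2 : ‖ζ * (1 - x.1 * conj' ζ)⁻¹ * ((1 - ζ * x.2) ^ 2)⁻¹‖ ≤ (δ⁻¹) ^ 3 := by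
    have : ‖ζ * (1 - x.1 * conj' ζ)⁻¹ * ((1 - ζ * x.2) ^ 2)⁻¹‖ = A⁻¹ * (B⁻¹) ^ 2 := by
      simp [norm_mul, norm_inv, norm_pow, hζ, ← hA, ← hB, inv_pow]
    rw [this]
    calc A⁻¹ * (B⁻¹) ^ 2 ≤ δ⁻¹ * (δ⁻¹) ^ 2 := by
          apply mul_le_mul hiA (pow_le_pow_left₀ (by positivity) hiB 2) (by positivity) (by positivity)
      _ = (δ⁻¹) ^ 3 := by ring
  calc ‖_ + _‖ ≤ ‖(conj' ζ * ((1 - x.1 * conj' ζ) ^ 2)⁻¹ * (1 - ζ * x.2)⁻¹) • ContinuousLinearMap.fst ℂ ℂ ℂ‖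
        + ‖(ζ * (1 - x.1 * conj' ζ)⁻¹ * ((1 - ζ * x.2) ^ 2)⁻¹) • ContinuousLinearMap.snd ℂ ℂ ℂ‖ := norm_add_le _ _
    _ ≤ (δ⁻¹) ^ 3 * 1 + (δ⁻¹) ^ 3 * 1 := by
        apply add_le_add
        · calc ‖_‖ ≤ ‖conj' ζ * ((1 - x.1 * conj' ζ) ^ 2)⁻¹ * (1 - ζ * x.2)⁻¹‖ * ‖ContinuousLinearMap.fst ℂ ℂ ℂ‖ := norm_smul_le _ _
            _ ≤ (δ⁻¹) ^ 3 * 1 := mul_le_mul hc1 (ContinuousLinearMap.norm_fst_le ℂ ℂ ℂ) (norm_nonneg _) (by positivity)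
        · calc ‖_‖ ≤ ‖ζ * (1 - x.1 * conj' ζ)⁻¹ * ((1 - ζ * x.2) ^ 2)⁻¹‖ * ‖ContinuousLinearMap.snd ℂ ℂ ℂ‖ := norm_smul_le _ _
            _ ≤ (δ⁻¹) ^ 3 * 1 := mul_le_mul hc2 (ContinuousLinearMap.norm_snd_le ℂ ℂ ℂ) (norm_nonneg _) (by positivity)
    _ = 2 * (δ⁻¹) ^ 3 := by ring

lemma hasDerivAt_conj_comp {I : ℂ → ℂ} {z d : ℂ} (h : HasDerivAt I d z) :
    HasDerivAt (fun w => conj' (I (conj' w))) (conj' d) (conj' z) := by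
  rw [hasDerivAt_iff_tendsto_slope] at h ⊢
  have hfun : slope (fun w => conj' (I (conj' w))) (conj' z)
      = fun w => conj' (slope I z (conj' w)) := by
    funext w
    simp only [slope_def_field]
    rw [map_div₀, map_sub, map_sub, Complex.conj_conj, Complex.conj_conj]
  rw [hfun]
  have h1 : Tendsto (fun w : ℂ => conj' w) (nhdsWithin (conj' z) {conj' z}ᶜ)
      (nhdsWithin z {z}ᶜ) := by
    rw [tendsto_nhdsWithin_iff]
    constructor
    · have := continuous_conj.tendsto (conj' z)
      rw [Complex.conj_conj] at this
      exact this.mono_left nhdsWithin_le_nhds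
    · filter_upwards [self_mem_nhdsWithin] with w hw
      simp only [mem_compl_iff, mem_singleton_iff] at hw ⊢
      intro hc
      apply hw
      rw [← hc, Complex.conj_conj]
  exact (continuous_conj.tendsto d).comp (h.comp h1)

lemma measConj : Measurable (fun ζ : ℂ => conj' ζ) := continuous_conj.measurable

lemma meas_integrand (z w : ℂ) :
    Measurable (fun ζ : ℂ => (1 - z * conj' ζ)⁻¹ * (1 - ζ * w)⁻¹) :=
  ((measurable_const.sub (measConj.const_mul z)).inv).mul
    ((measurable_const.sub (measurable_id.mul_const w)).inv)

lemma abs_lower {s : ℝ} {u : ℂ} (hu : ‖u‖ ≤ s) : 1 - s ≤ ‖1 - u‖ := by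
  have := norm_sub_norm_le (1 : ℂ) u
  simp only [norm_one] at this
  linarith

lemma one_sub_ne {u : ℂ} (h : ‖u‖ < 1) : 1 - u ≠ 0 := by
  intro h0
  have : u = 1 := by linear_combination -h0
  rw [this] at h; simp at h

noncomputable def Lf (σ : Measure ℂ) (p : ℂ × ℂ) : ℂ :=
  ∫ ζ, (1 - p.1 * conj' ζ)⁻¹ * (1 - ζ * p.2)⁻¹ ∂σ

lemma Lf_diff (σ : Measure ℂ) [IsFiniteMeasure σ] (hcirc : σ unitCircleᶜ = 0)
    {p : ℂ × ℂ} (h1 : ‖p.1‖ < 1) (h2 : ‖p.2‖ < 1) :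
    DifferentiableAt ℂ (Lf σ) p := by
  have hae : ∀ᵐ ζ ∂σ, ‖ζ‖ = 1 := by
    rw [ae_iff]; exact hcirc
  set m : ℝ := max (‖p.1‖) (‖p.2‖) with hm
  have hm1 : m < 1 := max_lt h1 h2
  have hm0 : 0 ≤ m := le_trans (norm_nonneg _) (le_max_left _ _)
  set ε : ℝ := (1 - m) / 2 with hε
  have hεpos : 0 < ε := by simp [hε]; linarith
  set s : ℝ := (1 + m) / 2 with hs
  have hs1 : s < 1 := by simp [hs]; linarith
  have hδ : (0:ℝ) < 1 - s := by linarith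
  -- membership in ball gives abs bounds
  have hball : ∀ x ∈ Metric.ball p ε, ‖x.1‖ ≤ s ∧ ‖x.2‖ ≤ s := by
    intro x hx
    rw [Metric.mem_ball, dist_eq_norm] at hx
    have k1 : ‖x.1 - p.1‖ ≤ ‖x - p‖ := norm_fst_le (x - p)
    have k2 : ‖x.2 - p.2‖ ≤ ‖x - p‖ := norm_snd_le (x - p)
    have e1 : ‖x.1‖ ≤ ‖p.1‖ + ‖x.1 - p.1‖ := by
      have := norm_sub_norm_le x.1 p.1
      linarith [this]
    have e2 : ‖x.2‖ ≤ ‖p.2‖ + ‖x.2 - p.2‖ := by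
      have := norm_sub_norm_le x.2 p.2
      linarith [this]
    constructor
    · calc ‖x.1‖ ≤ ‖p.1‖ + ‖x.1 - p.1‖ := e1
        _ ≤ m + ε := add_le_add (le_max_left _ _) (le_of_lt (lt_of_le_of_lt k1 hx))
        _ = s := by rw [hε, hs]; ring
    · calc ‖x.2‖ ≤ ‖p.2‖ + ‖x.2 - p.2‖ := e2
        _ ≤ m + ε := add_le_add (le_max_right _ _) (le_of_lt (lt_of_le_of_lt k2 hx))
        _ = s := by rw [hε, hs]; ring
  -- lower bounds on denominators, for x in the ball and ζ on the circle
  have hlow : ∀ x ∈ Metric.ball p ε, ∀ ζ : ℂ, ‖ζ‖ = 1 →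
      1 - s ≤ ‖1 - x.1 * conj' ζ‖ ∧ 1 - s ≤ ‖1 - ζ * x.2‖ := by
    intro x hx ζ hζ
    obtain ⟨hx1, hx2⟩ := hball x hx
    constructor
    · apply abs_lower
      rw [norm_mul, Complex.norm_conj, hζ, mul_one]; exact hx1
    · apply abs_lower
      rw [norm_mul, hζ, one_mul]; exact hx2
  set F' : (ℂ × ℂ) → ℂ → (ℂ × ℂ →L[ℂ] ℂ) := fun x ζ =>
    (conj' ζ * ((1 - x.1 * conj' ζ) ^ 2)⁻¹ * (1 - ζ * x.2)⁻¹) • ContinuousLinearMap.fst ℂ ℂ ℂ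
      + (ζ * (1 - x.1 * conj' ζ)⁻¹ * ((1 - ζ * x.2) ^ 2)⁻¹) • ContinuousLinearMap.snd ℂ ℂ ℂ
    with hF'
  have key : HasFDerivAt (Lf σ) (∫ ζ, F' p ζ ∂σ) p := by
    apply hasFDerivAt_integral_of_dominated_of_fderiv_le (F := fun (x : ℂ × ℂ) (ζ : ℂ) =>
        (1 - x.1 * conj' ζ)⁻¹ * (1 - ζ * x.2)⁻¹) (bound := fun _ => 2 * ((1 - s)⁻¹) ^ 3) (Metric.ball_mem_nhds p hεpos)
    · exact Eventually.of_forall (fun x => (meas_integrand x.1 x.2).aestronglyMeasurable)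
    · -- integrability at p
      apply (integrable_const (((1 - s)⁻¹) ^ 2)).mono'
        (meas_integrand p.1 p.2).aestronglyMeasurable
      filter_upwards [hae] with ζ hζ
      have hp : p ∈ Metric.ball p ε := Metric.mem_ball_self hεpos
      obtain ⟨l1, l2⟩ := hlow p hp ζ hζ
      rw [norm_mul, norm_inv, norm_inv]
      calc (‖1 - p.1 * conj' ζ‖)⁻¹ * (‖1 - ζ * p.2‖)⁻¹
          ≤ (1 - s)⁻¹ * (1 - s)⁻¹ := by
            apply mul_le_mul (inv_anti₀ hδ l1) (inv_anti₀ hδ l2) (by positivity) (by positivity)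
        _ = ((1 - s)⁻¹) ^ 2 := by ring
    · -- measurability of F' p
      apply AEStronglyMeasurable.add
      · apply AEStronglyMeasurable.smul_const
        exact (((measConj.mul
          (((measurable_const.sub (measConj.const_mul p.1)).pow_const 2).inv)).mul
          ((measurable_const.sub (measurable_id.mul_const p.2)).inv))).aestronglyMeasurable
      · apply AEStronglyMeasurable.smul_const
        exact (((measurable_id.mul
          ((measurable_const.sub (measConj.const_mul p.1)).inv)).mul
          (((measurable_const.sub (measurable_id.mul_const p.2)).pow_const 2).inv))).aestronglyMeasurable
    · -- bound
      filter_upwards [hae] with ζ hζ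
      intro x hx
      obtain ⟨l1, l2⟩ := hlow x hx ζ hζ
      exact norm_deriv_le ζ x hδ hζ l1 l2
    · exact integrable_const _
    · -- differentiability
      filter_upwards [hae] with ζ hζ
      intro x hx
      obtain ⟨l1, l2⟩ := hlow x hx ζ hζ
      have n1 : 1 - x.1 * conj' ζ ≠ 0 := by
        intro h0; rw [h0] at l1; simp at l1; linarith
      have n2 : 1 - ζ * x.2 ≠ 0 := by
        intro h0; rw [h0] at l2; simp at l2; linarith
      exact hasFDerivAt_integrand ζ x n1 n2
  exact key.differentiableAt

lemma isOpen_unitDisk : IsOpen unitDisk :=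
  isOpen_lt (by continuity) continuous_const


noncomputable def Jf (I : ℂ → ℂ) (w : ℂ) : ℂ := conj' (I (conj' w))

noncomputable def Rf (I : ℂ → ℂ) (α : ℂ) (p : ℂ × ℂ) : ℂ :=
  ((1 - I p.1 * Jf I p.2) / ((1 - conj' α * I p.1) * (1 - α * Jf I p.2))) * (1 - p.1 * p.2)⁻¹

lemma Jf_diffAt {I : ℂ → ℂ} {w : ℂ} (h : DifferentiableAt ℂ I (conj' w)) :
    DifferentiableAt ℂ (Jf I) w := by
  have := hasDerivAt_conj_comp h.hasDerivAt
  rw [Complex.conj_conj] at this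
  exact this.differentiableAt

lemma Rf_diff {I : ℂ → ℂ} (hId : DifferentiableOn ℂ I unitDisk)
    (hmap : Set.MapsTo I unitDisk unitDisk) {α : ℂ} (hα : ‖α‖ = 1)
    {p : ℂ × ℂ} (h1 : ‖p.1‖ < 1) (h2 : ‖p.2‖ < 1) :
    DifferentiableAt ℂ (Rf I α) p := by
  have hd1 : DifferentiableAt ℂ I p.1 :=
    hId.differentiableAt (isOpen_unitDisk.mem_nhds h1)
  have hc2 : ‖conj' p.2‖ < 1 := by rwa [Complex.norm_conj]
  have hd2 : DifferentiableAt ℂ I (conj' p.2) :=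
    hId.differentiableAt (isOpen_unitDisk.mem_nhds hc2)
  have hJ : DifferentiableAt ℂ (Jf I) p.2 := Jf_diffAt hd2
  have hI1 : DifferentiableAt ℂ (fun q : ℂ × ℂ => I q.1) p :=
    hd1.comp p differentiableAt_fst
  have hJ2 : DifferentiableAt ℂ (fun q : ℂ × ℂ => Jf I q.2) p :=
    hJ.comp p differentiableAt_snd
  have habsI1 : ‖I p.1‖ < 1 := hmap h1
  have habsJ2 : ‖Jf I p.2‖ < 1 := by
    rw [Jf, Complex.norm_conj]; exact hmap hc2
  have hne1 : 1 - conj' α * I p.1 ≠ 0 := by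
    apply one_sub_ne
    rw [norm_mul, Complex.norm_conj, hα, one_mul]; exact habsI1
  have hne2 : 1 - α * Jf I p.2 ≠ 0 := by
    apply one_sub_ne
    rw [norm_mul, hα, one_mul]; exact habsJ2
  have hne3 : 1 - p.1 * p.2 ≠ 0 := by
    apply one_sub_ne
    rw [norm_mul]
    nlinarith [norm_nonneg p.1, norm_nonneg p.2]
  unfold Rf
  simp only [div_eq_mul_inv]
  apply DifferentiableAt.mul
  · apply DifferentiableAt.mul
    · exact (differentiableAt_const _).sub (hI1.mul hJ2)
    · have hden : DifferentiableAt ℂ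
          (fun y : ℂ × ℂ => (1 - conj' α * I y.1) * (1 - α * Jf I y.2)) p :=
        ((differentiableAt_const _).sub (hI1.const_mul _)).mul
          ((differentiableAt_const _).sub (hJ2.const_mul _))
      exact hden.inv (mul_ne_zero hne1 hne2)
  · exact ((differentiableAt_const _).sub (differentiableAt_fst.mul differentiableAt_snd)).inv hne3

lemma tendsto_real_punctured : Tendsto (fun t : ℝ => (t : ℂ))
    (nhdsWithin 0 (Set.Ioi 0)) (nhdsWithin 0 {(0:ℂ)}ᶜ) := by
  rw [tendsto_nhdsWithin_iff]
  constructor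
  · have h : Tendsto (fun t : ℝ => (t : ℂ)) (nhds 0) (nhds 0) := by
      have := Complex.continuous_ofReal.tendsto 0
      simpa using this
    exact h.mono_left nhdsWithin_le_nhds
  · filter_upwards [self_mem_nhdsWithin] with t ht
    simp only [mem_compl_iff, mem_singleton_iff, Complex.ofReal_eq_zero]
    exact ne_of_gt ht

set_option maxHeartbeats 1000000 in
lemma polarization {G : ℂ × ℂ → ℂ}
    (hG : ∀ p : ℂ × ℂ, ‖p.1‖ < 1 → ‖p.2‖ < 1 → DifferentiableAt ℂ G p)
    (hdiag : ∀ z : ℂ, ‖z‖ < 1 → G (z, conj' z) = 0) :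
    ∀ p : ℂ × ℂ, ‖p.1‖ < 1 → ‖p.2‖ < 1 → G p = 0 := by
  set K : ℂ × ℂ → ℂ := fun q => G (q.1 + Complex.I * q.2, q.1 - Complex.I * q.2) with hK
  have hKd : ∀ q : ℂ × ℂ, ‖q.1 + Complex.I * q.2‖ < 1 →
      ‖q.1 - Complex.I * q.2‖ < 1 → DifferentiableAt ℂ K q := by
    intro q hq1 hq2
    have hT : DifferentiableAt ℂ
        (fun q : ℂ × ℂ => (q.1 + Complex.I * q.2, q.1 - Complex.I * q.2)) q :=
      ((differentiableAt_fst.add (differentiableAt_snd.const_mul _)).prodMk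
        (differentiableAt_fst.sub (differentiableAt_snd.const_mul _)))
    have hGq : DifferentiableAt ℂ G (q.1 + Complex.I * q.2, q.1 - Complex.I * q.2) :=
      hG (q.1 + Complex.I * q.2, q.1 - Complex.I * q.2) hq1 hq2
    exact hGq.comp q hT
  -- Step 1 : K (u, y) = 0 for real y
  have step1 : ∀ y : ℝ, ∀ u : ℂ, ‖u + Complex.I * y‖ < 1 →
      ‖u - Complex.I * y‖ < 1 → K (u, (y : ℂ)) = 0 := by
    intro y u hu1 hu2
    have hyabs : |y| < 1 := by
      have he : (u + Complex.I * y) - (u - Complex.I * y) = 2 * Complex.I * y := by ring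
      have h2y : ‖2 * Complex.I * (y:ℂ)‖ < 2 := by
        rw [← he]
        calc ‖(u + Complex.I * y) - (u - Complex.I * y)‖
            ≤ ‖u + Complex.I * y‖ + ‖u - Complex.I * y‖ :=
              norm_sub_le _ _
          _ < 2 := by linarith
      have heq : ‖2 * Complex.I * (y:ℂ)‖ = 2 * |y| := by
        simp [Complex.norm_real]
      linarith [heq ▸ h2y]
    set Sy : Set ℂ := Metric.ball (-(Complex.I * (y:ℂ))) 1 ∩ Metric.ball (Complex.I * (y:ℂ)) 1
      with hSy
    have hmem : ∀ x : ℂ, x ∈ Sy ↔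
        ‖x + Complex.I * y‖ < 1 ∧ ‖x - Complex.I * y‖ < 1 := by
      intro x
      simp only [hSy, mem_inter_iff, Metric.mem_ball, Complex.dist_eq, sub_neg_eq_add]
    have hSopen : IsOpen Sy := Metric.isOpen_ball.inter Metric.isOpen_ball
    have hSpre : IsPreconnected Sy :=
      ((convex_ball _ _).inter (convex_ball _ _)).isPreconnected
    have hanal : AnalyticOnNhd ℂ (fun x : ℂ => K (x, (y:ℂ))) Sy := by
      apply DifferentiableOn.analyticOnNhd _ hSopen
      intro x hx
      obtain ⟨m1, m2⟩ := (hmem x).1 hx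
      exact ((hKd (x, (y:ℂ)) m1 m2).comp (f := fun x : ℂ => (x, (y:ℂ))) x
        ((differentiableAt_id.prodMk (differentiableAt_const _)))).differentiableWithinAt
    have h0mem : (0:ℂ) ∈ Sy := by
      rw [hmem]
      constructor <;>
        simpa [Complex.norm_real] using hyabs
    have hfreq : ∃ᶠ x in nhdsWithin (0:ℂ) {(0:ℂ)}ᶜ, (fun x : ℂ => K (x, (y:ℂ))) x = 0 := by
      apply tendsto_real_punctured.frequently
      apply Filter.Eventually.frequently
      filter_upwards [Ioo_mem_nhdsGT_of_mem (Set.left_mem_Ico.mpr (by linarith [abs_nonneg y] : (0:ℝ) < 1 - |y|))] with t ht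
      obtain ⟨ht0, ht1⟩ := ht
      have habs : ‖(t:ℂ) + Complex.I * y‖ < 1 := by
        calc ‖(t:ℂ) + Complex.I * y‖
            ≤ ‖(t:ℂ)‖ + ‖Complex.I * y‖ := norm_add_le _ _
          _ = |t| + |y| := by simp [Complex.norm_real]
          _ < 1 := by rw [abs_of_pos ht0]; linarith
      have hc : conj' ((t:ℂ) + Complex.I * y) = (t:ℂ) - Complex.I * y := by
        simp [map_add, map_mul, Complex.conj_ofReal, Complex.conj_I]
        ring
      have := hdiag ((t:ℂ) + Complex.I * y) habs
      rw [hc] at this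
      simpa [hK] using this
    have := hanal.eqOn_zero_of_preconnected_of_frequently_eq_zero hSpre h0mem hfreq
    exact this ((hmem u).2 ⟨hu1, hu2⟩)
  -- Step 2 : K (u, v) = 0 for all admissible (u,v)
  have step2 : ∀ u : ℂ, ‖u‖ < 1 → ∀ v : ℂ,
      ‖u + Complex.I * v‖ < 1 → ‖u - Complex.I * v‖ < 1 →
      K (u, v) = 0 := by
    intro u hu v hv1 hv2
    set Su : Set ℂ := Metric.ball (Complex.I * u) 1 ∩ Metric.ball (-(Complex.I * u)) 1 with hSu
    have hid1 : ∀ x : ℂ, u + Complex.I * x = Complex.I * (x - Complex.I * u) := by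
      intro x; have := Complex.I_mul_I; ring_nf; rw [Complex.I_sq]; ring
    have hid2 : ∀ x : ℂ, u - Complex.I * x = -Complex.I * (x + Complex.I * u) := by
      intro x; ring_nf; rw [Complex.I_sq]; ring
    have hmem : ∀ x : ℂ, x ∈ Su ↔
        ‖u + Complex.I * x‖ < 1 ∧ ‖u - Complex.I * x‖ < 1 := by
      intro x
      simp only [hSu, mem_inter_iff, Metric.mem_ball, Complex.dist_eq, sub_neg_eq_add]
      rw [hid1 x, hid2 x]
      simp
    have hSopen : IsOpen Su := Metric.isOpen_ball.inter Metric.isOpen_ball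
    have hSpre : IsPreconnected Su :=
      ((convex_ball _ _).inter (convex_ball _ _)).isPreconnected
    have hanal : AnalyticOnNhd ℂ (fun x : ℂ => K (u, x)) Su := by
      apply DifferentiableOn.analyticOnNhd _ hSopen
      intro x hx
      obtain ⟨m1, m2⟩ := (hmem x).1 hx
      exact ((hKd (u, x) m1 m2).comp (f := fun x : ℂ => (u, x)) x
        (((differentiableAt_const _).prodMk differentiableAt_id))).differentiableWithinAt
    have h0mem : (0:ℂ) ∈ Su := by
      rw [hmem]
      constructor <;> simpa using hu
    have hfreq : ∃ᶠ x in nhdsWithin (0:ℂ) {(0:ℂ)}ᶜ, (fun x : ℂ => K (u, x)) x = 0 := by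
      apply tendsto_real_punctured.frequently
      apply Filter.Eventually.frequently
      filter_upwards [Ioo_mem_nhdsGT_of_mem (Set.left_mem_Ico.mpr
        (by linarith [norm_nonneg u] : (0:ℝ) < 1 - ‖u‖))] with t ht
      obtain ⟨ht0, ht1⟩ := ht
      apply step1 t u
      · calc ‖u + Complex.I * t‖
            ≤ ‖u‖ + ‖Complex.I * t‖ := norm_add_le _ _
          _ = ‖u‖ + |t| := by simp [Complex.norm_real]
          _ < 1 := by rw [abs_of_pos ht0]; linarith
      · calc ‖u - Complex.I * t‖
            ≤ ‖u‖ + ‖Complex.I * t‖ := norm_sub_le _ _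
          _ = ‖u‖ + |t| := by simp [Complex.norm_real]
          _ < 1 := by rw [abs_of_pos ht0]; linarith
    have := hanal.eqOn_zero_of_preconnected_of_frequently_eq_zero hSpre h0mem hfreq
    exact this ((hmem v).2 ⟨hv1, hv2⟩)
  -- Step 3 : conclude
  intro p h1 h2
  set u : ℂ := (p.1 + p.2) / 2 with hu
  set v : ℂ := (p.1 - p.2) / (2 * Complex.I) with hv
  have e1 : u + Complex.I * v = p.1 := by
    rw [hu, hv]
    field_simp [Complex.I_ne_zero]
    ring
  have e2 : u - Complex.I * v = p.2 := by
    rw [hu, hv]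
    field_simp [Complex.I_ne_zero]
    ring
  have habsu : ‖u‖ < 1 := by
    have h : ‖p.1 + p.2‖ ≤ ‖p.1‖ + ‖p.2‖ :=
      norm_add_le _ _
    rw [hu, norm_div, Complex.norm_two]
    rw [div_lt_one (by norm_num : (0:ℝ) < 2)]
    linarith
  have := step2 u habsu v (by rw [e1]; exact h1) (by rw [e2]; exact h2)
  rw [hK] at this
  simp only at this
  rw [e1, e2] at this
  rwa [Prod.mk.eta] at this


lemma diag {I : ℂ → ℂ} (hmap : Set.MapsTo I unitDisk unitDisk) {α : ℂ}
    (hα : ‖α‖ = 1) (σ : Measure ℂ) (hcirc : σ unitCircleᶜ = 0)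
    (hpois : ∀ z ∈ unitDisk, poissonIntegral σ z =
      (1 - ‖I z‖ ^ 2) / ‖α - I z‖ ^ 2)
    {z : ℂ} (hz : ‖z‖ < 1) :
    Lf σ (z, conj' z) = Rf I α (z, conj' z) := by
  have hae : ∀ᵐ ζ ∂σ, ‖ζ‖ = 1 := by
    rw [ae_iff]
    have he : {a : ℂ | ¬ ‖a‖ = 1} = unitCircleᶜ := by
      ext a; simp [unitCircle]
    rw [he]; exact hcirc
  have hz2 : (0:ℝ) < 1 - ‖z‖ ^ 2 := by
    nlinarith [norm_nonneg z]
  -- LHS as a real integral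
  have h1 : Lf σ (z, conj' z)
      = ((∫ ζ, (Complex.normSq (1 - z * conj' ζ))⁻¹ ∂σ : ℝ) : ℂ) := by
    rw [Lf]
    show ∫ ζ, (1 - z * conj' ζ)⁻¹ * (1 - ζ * conj' z)⁻¹ ∂σ = _
    have hcast : ((∫ ζ, (Complex.normSq (1 - z * conj' ζ))⁻¹ ∂σ : ℝ) : ℂ)
        = ∫ ζ, (((Complex.normSq (1 - z * conj' ζ))⁻¹ : ℝ) : ℂ) ∂σ := integral_ofReal.symm
    rw [hcast]
    apply integral_congr_ae
    apply Eventually.of_forall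
    intro ζ
    have hconj : conj' (1 - z * conj' ζ) = 1 - ζ * conj' z := by
      rw [map_sub, map_one, map_mul, Complex.conj_conj]; ring
    simp only
    rw [← hconj, ← mul_inv, Complex.mul_conj, ← Complex.ofReal_inv]
  -- the real integral equals the Poisson integral divided by 1 - |z|^2
  have hP : poissonIntegral σ z
      = (1 - ‖z‖ ^ 2) * ∫ ζ, (Complex.normSq (1 - z * conj' ζ))⁻¹ ∂σ := by
    rw [poissonIntegral, ← integral_const_mul]
    apply integral_congr_ae
    filter_upwards [hae] with ζ hζ
    have hζ1 : conj' ζ * ζ = 1 := by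
      rw [mul_comm, Complex.mul_conj]
      norm_cast
      rw [Complex.normSq_eq_norm_sq, hζ]; norm_num
    have hfact : 1 - z * conj' ζ = conj' ζ * (ζ - z) := by
      rw [mul_sub, hζ1]; ring
    rw [hfact, Complex.normSq_mul, Complex.normSq_conj]
    have : Complex.normSq ζ = 1 := by
      rw [Complex.normSq_eq_norm_sq, hζ]; norm_num
    rw [this, one_mul, ← Complex.sq_norm, div_eq_mul_inv]
  have h2 : ∫ ζ, (Complex.normSq (1 - z * conj' ζ))⁻¹ ∂σ
      = poissonIntegral σ z / (1 - ‖z‖ ^ 2) := by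
    rw [hP, mul_div_cancel_left₀ _ (ne_of_gt hz2)]
  have h3 : poissonIntegral σ z
      = (1 - ‖I z‖ ^ 2) / ‖α - I z‖ ^ 2 := hpois z hz
  -- rewrite RHS
  have hb : ‖I z‖ < 1 := hmap hz
  have hbne : ‖α - I z‖ ^ 2 ≠ 0 := by
    have : α - I z ≠ 0 := by
      intro h0
      have : α = I z := by linear_combination h0
      rw [← this] at hb; rw [hα] at hb; linarith
    exact pow_ne_zero 2 (norm_ne_zero_iff.mpr this)
  have hJ : Jf I (conj' z) = conj' (I z) := by rw [Jf, Complex.conj_conj]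
  have num1 : 1 - I z * conj' (I z) = ((1 - ‖I z‖ ^ 2 : ℝ) : ℂ) := by
    rw [Complex.mul_conj]
    push_cast [Complex.sq_norm]
    ring
  have den1 : (1 - conj' α * I z) * (1 - α * conj' (I z))
      = ((‖α - I z‖ ^ 2 : ℝ) : ℂ) := by
    have e : 1 - α * conj' (I z) = conj' (1 - conj' α * I z) := by
      rw [map_sub, map_one, map_mul, Complex.conj_conj]
    rw [e, Complex.mul_conj]
    have hfa : α - I z = α * (1 - conj' α * I z) := by
      have : α * conj' α = 1 := by
        rw [Complex.mul_conj]
        norm_cast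
        rw [Complex.normSq_eq_norm_sq, hα]; norm_num
      rw [mul_sub, mul_one, ← mul_assoc, this, one_mul]
    have : Complex.normSq (α - I z) = Complex.normSq (1 - conj' α * I z) := by
      rw [hfa, Complex.normSq_mul, Complex.normSq_eq_norm_sq α, hα]
      norm_num
    rw [← this, ← Complex.sq_norm]
  have den2 : 1 - z * conj' z = ((1 - ‖z‖ ^ 2 : ℝ) : ℂ) := by
    rw [Complex.mul_conj]
    push_cast [Complex.sq_norm]
    ring
  rw [h1, h2, h3, Rf]
  simp only [hJ]
  rw [num1, den1, den2]
  push_cast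
  rw [div_div]
  rw [div_eq_mul_inv, div_eq_mul_inv, mul_inv]
  ring

/-- the value of the double Cauchy integral against a Clark measure. -/
theorem cauchy_integral_clark (I Ib : ℂ → ℂ) (hI : IsInner I Ib)
    (α : ℂ) (hα : α ∈ unitCircle) (σ : Measure ℂ) (hσ : IsClarkMeasure I α σ) :
    ∀ z ∈ unitDisk, ∀ w ∈ unitDisk,
      ∫ ζ, (1 - z * (starRingEnd ℂ) ζ)⁻¹ * (1 - ζ * (starRingEnd ℂ) w)⁻¹ ∂σ =
        ((1 - I z * (starRingEnd ℂ) (I w)) /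
            ((1 - (starRingEnd ℂ) α * I z) * (1 - α * (starRingEnd ℂ) (I w)))) *
          (1 - z * (starRingEnd ℂ) w)⁻¹ := by
  obtain ⟨hId, hmap, -⟩ := hI
  obtain ⟨hfin, hcirc, hpois⟩ := hσ
  haveI : IsFiniteMeasure σ := hfin
  have hαabs : ‖α‖ = 1 := hα
  intro z hz w hw
  have hz1 : ‖z‖ < 1 := hz
  have hw1 : ‖w‖ < 1 := hw
  have hGdiff : ∀ p : ℂ × ℂ, ‖p.1‖ < 1 → ‖p.2‖ < 1 →
      DifferentiableAt ℂ (fun p => Lf σ p - Rf I α p) p := by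
    intro p h1 h2
    exact (Lf_diff σ hcirc h1 h2).sub (Rf_diff hId hmap hαabs h1 h2)
  have hGdiag : ∀ u : ℂ, ‖u‖ < 1 →
      (fun p => Lf σ p - Rf I α p) (u, conj' u) = 0 := by
    intro u hu
    simp only
    rw [sub_eq_zero]
    exact diag hmap hαabs σ hcirc hpois hu
  have hcw : ‖conj' w‖ < 1 := by rwa [Complex.norm_conj]
  have hzero := polarization hGdiff hGdiag (z, conj' w) hz1 hcw
  rw [sub_eq_zero] at hzero
  have hL : Lf σ (z, conj' w)
      = ∫ ζ, (1 - z * conj' ζ)⁻¹ * (1 - ζ * conj' w)⁻¹ ∂σ := rfl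
  have hR : Rf I α (z, conj' w)
      = ((1 - I z * conj' (I w)) / ((1 - conj' α * I z) * (1 - α * conj' (I w)))) *
          (1 - z * conj' w)⁻¹ := by
    rw [Rf]
    have : Jf I (conj' w) = conj' (I w) := by rw [Jf, Complex.conj_conj]
    rw [this]
  rw [hL, hR] at hzero
  exact hzero
end
end
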